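/- Let Ψ be the GTS characteristic exponent with cumulants (κ_k), so that for each t > 0 the function ξ ↦ exp(tΨ(ξ)) is the characteristic function of Y_t. Then the characteristic function of (Y_t - tκ₁)/√(tκ₂) converges pointwise to e^{-ξ²/2} as t → +∞; i.e., the normalized GTS Lévy process converges in distribution to a standard normal. -/

import Mathlib

open Complex Filter

/-- The GTS characteristic exponent. -/
noncomputable def gtsPsi (μ βp βm αp αm lp lm : ℝ) (ξ : ℝ) : ℂ :=
  Complex.I * (μ : ℂ) * (ξ : ℂ) +
    (αp : ℂ) * (Real.Gamma (-βp) : ℂ) *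
      (((lp : ℂ) - Complex.I * (ξ : ℂ)) ^ (βp : ℂ) - (lp : ℂ) ^ (βp : ℂ)) +
    (αm : ℂ) * (Real.Gamma (-βm) : ℂ) *
      (((lm : ℂ) + Complex.I * (ξ : ℂ)) ^ (βm : ℂ) - (lm : ℂ) ^ (βm : ℂ))

lemma cpow_aux_sub (l : ℝ) (γ : ℂ) (hl : 0 < l) (u : ℝ) :
    HasDerivAt (fun u : ℝ => ((l : ℂ) - Complex.I * u) ^ γ)
      (γ * ((l : ℂ) - Complex.I * u) ^ (γ - 1) * (-Complex.I)) u := by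
  have h1 : HasDerivAt (fun z : ℂ => (l : ℂ) - Complex.I * z) (-Complex.I) (u : ℂ) := by
    simpa using ((hasDerivAt_id (u:ℂ)).const_mul Complex.I).const_sub (l : ℂ)
  have hs : ((l : ℂ) - Complex.I * (u:ℂ)) ∈ Complex.slitPlane := by
    simp [Complex.mem_slitPlane_iff]
    left; exact hl
  exact (h1.cpow_const hs).comp_ofReal

lemma cpow_aux_add (l : ℝ) (γ : ℂ) (hl : 0 < l) (u : ℝ) :
    HasDerivAt (fun u : ℝ => ((l : ℂ) + Complex.I * u) ^ γ)
      (γ * ((l : ℂ) + Complex.I * u) ^ (γ - 1) * Complex.I) u := by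
  have h1 : HasDerivAt (fun z : ℂ => (l : ℂ) + Complex.I * z) (Complex.I) (u : ℂ) := by
    simpa using ((hasDerivAt_id (u:ℂ)).const_mul Complex.I).const_add (l : ℂ)
  have hs : ((l : ℂ) + Complex.I * (u:ℂ)) ∈ Complex.slitPlane := by
    simp [Complex.mem_slitPlane_iff]
    left; exact hl
  exact (h1.cpow_const hs).comp_ofReal

lemma ofReal_hasDerivAt (u : ℝ) : HasDerivAt (fun y : ℝ => (y : ℂ)) 1 u :=
  (hasDerivAt_id (u:ℂ)).comp_ofReal

/-- first derivative of gtsPsi -/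
noncomputable def gtsPsi' (μ βp βm αp αm lp lm : ℝ) (u : ℝ) : ℂ :=
  Complex.I * (μ : ℂ) +
    (αp : ℂ) * (Real.Gamma (-βp) : ℂ) *
      ((βp : ℂ) * ((lp : ℂ) - Complex.I * u) ^ ((βp : ℂ) - 1) * (-Complex.I)) +
    (αm : ℂ) * (Real.Gamma (-βm) : ℂ) *
      ((βm : ℂ) * ((lm : ℂ) + Complex.I * u) ^ ((βm : ℂ) - 1) * Complex.I)

lemma gtsPsi_hasDerivAt (μ βp βm αp αm lp lm : ℝ) (hlp : 0 < lp) (hlm : 0 < lm) (u : ℝ) :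
    HasDerivAt (gtsPsi μ βp βm αp αm lp lm) (gtsPsi' μ βp βm αp αm lp lm u) u := by
  unfold gtsPsi gtsPsi'
  have h1 : HasDerivAt (fun u : ℝ => Complex.I * (μ:ℂ) * (u:ℂ)) (Complex.I * μ) u := by
    simpa using (ofReal_hasDerivAt u).const_mul (Complex.I * (μ:ℂ))
  exact (h1.add (((cpow_aux_sub lp (βp:ℂ) hlp u).sub_const _).const_mul _)).add
    (((cpow_aux_add lm (βm:ℂ) hlm u).sub_const _).const_mul _)

lemma gtsPsi'_hasDerivAt (μ βp βm αp αm lp lm : ℝ) (hlp : 0 < lp) (hlm : 0 < lm) (u : ℝ) :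
    HasDerivAt (gtsPsi' μ βp βm αp αm lp lm)
      ((αp : ℂ) * (Real.Gamma (-βp) : ℂ) *
          ((βp : ℂ) * (((βp : ℂ) - 1) * ((lp : ℂ) - Complex.I * u) ^ ((βp : ℂ) - 1 - 1) * (-Complex.I)) * (-Complex.I)) +
        (αm : ℂ) * (Real.Gamma (-βm) : ℂ) *
          ((βm : ℂ) * (((βm : ℂ) - 1) * ((lm : ℂ) + Complex.I * u) ^ ((βm : ℂ) - 1 - 1) * Complex.I) * Complex.I)) u := by
  unfold gtsPsi'
  have hp := ((cpow_aux_sub lp ((βp:ℂ)-1) hlp u).const_mul (βp:ℂ)).mul_const (-Complex.I)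
  have hm := ((cpow_aux_add lm ((βm:ℂ)-1) hlm u).const_mul (βm:ℂ)).mul_const (Complex.I)
  have h := ((hasDerivAt_const u (Complex.I * (μ:ℂ))).add
      (hp.const_mul ((αp:ℂ) * (Real.Gamma (-βp):ℂ)))).add
      (hm.const_mul ((αm:ℂ) * (Real.Gamma (-βm):ℂ)))
  refine h.congr_deriv ?_
  ring
lemma taylor2 {f f' : ℝ → ℂ} {c : ℂ}
    (hd : ∀ u : ℝ, HasDerivAt f (f' u) u)
    (hf0 : f 0 = 0) (hf'0 : f' 0 = 0)
    (h2 : HasDerivAt f' c 0) :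
    Tendsto (fun u : ℝ => f u / (u : ℂ) ^ 2) (nhdsWithin 0 {(0:ℝ)}ᶜ)
      (nhds (c / 2)) := by
  have hgd : ∀ u : ℝ, HasDerivAt (fun u : ℝ => f u - c * (u:ℂ) ^ 2 / 2) (f' u - c * u) u := by
    intro u
    have h1 : HasDerivAt (fun u : ℝ => c * (u:ℂ) ^ 2 / 2) (c * u) u := by
      have hsq : HasDerivAt (fun u : ℝ => (u:ℂ) ^ 2) (2 * u) u := by
        have := ((hasDerivAt_id (u:ℂ)).pow 2).comp_ofReal
        simpa using this
      have := (hsq.const_mul c).div_const 2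
      refine this.congr_deriv ?_
      ring
    exact (hd u).sub h1
  have key : Tendsto (fun u : ℝ => (f u - c * (u:ℂ) ^ 2 / 2) / (u : ℂ) ^ 2)
      (nhdsWithin 0 {(0:ℝ)}ᶜ) (nhds 0) := by
    rw [Metric.tendsto_nhdsWithin_nhds]
    intro ε hε
    have hslope := hasDerivAt_iff_tendsto_slope.mp h2
    rw [Metric.tendsto_nhdsWithin_nhds] at hslope
    obtain ⟨δ, hδ, hδ'⟩ := hslope (ε/2) (by positivity)
    refine ⟨δ, hδ, ?_⟩
    intro x hx hxd
    -- bound on the derivative on uIcc 0 x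
    have hbound : ∀ u ∈ Set.uIcc (0:ℝ) x, ‖f' u - c * u‖ ≤ ε / 2 * |x| := by
      intro u hu
      have huabs : |u| ≤ |x| := by
        rcases Set.mem_uIcc.mp hu with ⟨h1, h2⟩ | ⟨h1, h2⟩ <;> rw [abs_le] <;>
          constructor <;> cases abs_cases x <;> linarith [abs_nonneg x]
      rcases eq_or_ne u 0 with rfl | hu0
      · simp [hf'0]
        positivity
      · have hud : dist u (0:ℝ) < δ := by
          rw [Real.dist_eq, sub_zero]
          exact lt_of_le_of_lt huabs (by rwa [Real.dist_eq, sub_zero] at hxd)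
        have hlt := hδ' hu0 hud
        rw [dist_eq_norm] at hlt
        have hune : (u:ℂ) ≠ 0 := Complex.ofReal_ne_zero.mpr hu0
        have hs : f' u - c * u = (u:ℂ) * (slope f' 0 u - c) := by
          simp only [slope, hf'0, vsub_eq_sub, sub_zero, Complex.real_smul]
          push_cast
          field_simp
        calc ‖f' u - c * u‖ = |u| * ‖slope f' 0 u - c‖ := by
              rw [hs, norm_mul, Complex.norm_real, Real.norm_eq_abs]
          _ ≤ |u| * (ε/2) := mul_le_mul_of_nonneg_left hlt.le (abs_nonneg u)
          _ ≤ ε / 2 * |x| := by nlinarith [abs_nonneg u, abs_nonneg x]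
    have hmvt := Convex.norm_image_sub_le_of_norm_hasDerivWithin_le
      (f := fun u : ℝ => f u - c * (u:ℂ) ^ 2 / 2) (f' := fun u => f' u - c * u)
      (fun u _ => (hgd u).hasDerivWithinAt) hbound (convex_uIcc 0 x)
      (Set.left_mem_uIcc) (Set.right_mem_uIcc)
    have hx2 : ‖((x:ℂ))^2‖ = x^2 := by
      rw [norm_pow, Complex.norm_real, Real.norm_eq_abs, _root_.sq_abs]
    rw [dist_eq_norm, sub_zero, norm_div, hx2]
    have hx0 : x ≠ 0 := by simpa using hx
    have hxne : (0:ℝ) < x^2 := by positivity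
    rw [div_lt_iff₀ hxne]
    have : ‖f x - c * (x:ℂ) ^ 2 / 2‖ ≤ ε / 2 * |x| * ‖x - (0:ℝ)‖ := by
      simpa [hf0] using hmvt
    calc ‖f x - c * (x:ℂ) ^ 2 / 2‖ ≤ ε / 2 * |x| * |x| := by
            simpa [Real.norm_eq_abs] using this
      _ = ε/2 * x^2 := by rw [mul_assoc, ← _root_.sq_abs]; ring
      _ < ε * x^2 := by nlinarith
  have heq : ∀ᶠ u : ℝ in nhdsWithin 0 {(0:ℝ)}ᶜ,
      (f u - c * (u:ℂ) ^ 2 / 2) / (u : ℂ) ^ 2 + c / 2 = f u / (u:ℂ)^2 := by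
    filter_upwards [self_mem_nhdsWithin] with u hu
    have : ((u:ℂ))^2 ≠ 0 := by
      simpa using Complex.ofReal_ne_zero.mpr (by simpa using hu)
    field_simp
    rw [div_add' _ _ _ this]
    ring
  have := (key.add tendsto_const_nhds).congr' heq
  simpa using this

lemma realA (α β l : ℝ) (hβ0 : 0 < β) (hβ1 : β < 1) (hl : 0 < l) :
    α * Real.Gamma (1 - β) / l ^ ((1:ℝ) - β) = -(α * Real.Gamma (-β) * β * l ^ (β - 1)) := by
  have h1 : Real.Gamma (1 - β) = -β * Real.Gamma (-β) := by
    rw [show (1:ℝ) - β = -β + 1 by ring, Real.Gamma_add_one (by simpa using hβ0.ne')]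
  have h2 : l ^ (β - 1) = (l ^ ((1:ℝ) - β))⁻¹ := by
    rw [show β - 1 = -((1:ℝ) - β) by ring, Real.rpow_neg hl.le]
  have h3 : l ^ ((1:ℝ) - β) ≠ 0 := (Real.rpow_pos_of_pos hl _).ne'
  rw [h1, h2]
  field_simp

lemma realB (α β l : ℝ) (hβ0 : 0 < β) (hβ1 : β < 1) (hl : 0 < l) :
    α * Real.Gamma (2 - β) / l ^ ((2:ℝ) - β) = α * Real.Gamma (-β) * β * (β - 1) * l ^ (β - 2) := by
  have h1 : Real.Gamma (2 - β) = (1 - β) * (-β * Real.Gamma (-β)) := by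
    rw [show (2:ℝ) - β = (1 - β) + 1 by ring, Real.Gamma_add_one (by intro h; linarith : (1:ℝ) - β ≠ 0),
      show (1:ℝ) - β = -β + 1 by ring, Real.Gamma_add_one (by simpa using hβ0.ne')]
  have h2 : l ^ (β - 2) = (l ^ ((2:ℝ) - β))⁻¹ := by
    rw [show β - 2 = -((2:ℝ) - β) by ring, Real.rpow_neg hl.le]
  have h3 : l ^ ((2:ℝ) - β) ≠ 0 := (Real.rpow_pos_of_pos hl _).ne'
  rw [h1, h2]
  field_simp
  try left
  try ring

lemma cast_cpow_sub_one (l β : ℝ) (hl : 0 < l) :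
    ((l:ℂ)) ^ ((β:ℂ) - 1) = ((l ^ (β - 1) : ℝ) : ℂ) := by
  rw [show ((β:ℂ) - 1) = ((β - 1 : ℝ) : ℂ) by push_cast; ring, ← Complex.ofReal_cpow hl.le]

lemma cast_cpow_sub_two (l β : ℝ) (hl : 0 < l) :
    ((l:ℂ)) ^ ((β:ℂ) - 1 - 1) = ((l ^ (β - 2) : ℝ) : ℂ) := by
  rw [show ((β:ℂ) - 1 - 1) = ((β - 2 : ℝ) : ℂ) by push_cast; ring, ← Complex.ofReal_cpow hl.le]

theorem gts_process_asymptotic_normality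
    (μ βp βm αp αm lp lm : ℝ)
    (hβp0 : 0 < βp) (hβp1 : βp < 1) (hβm0 : 0 < βm) (hβm1 : βm < 1)
    (hlp : 0 < lp) (hlm : 0 < lm) (hαp : 0 ≤ αp) (hαm : 0 ≤ αm)
    (hα : 0 < αp ∨ 0 < αm)
    (κ₁ κ₂ : ℝ)
    (hκ₁ : κ₁ = μ + αp * Real.Gamma (1 - βp) / lp ^ ((1 : ℝ) - βp)
      - αm * Real.Gamma (1 - βm) / lm ^ ((1 : ℝ) - βm))
    (hκ₂ : κ₂ = αp * Real.Gamma (2 - βp) / lp ^ ((2 : ℝ) - βp) +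
      αm * Real.Gamma (2 - βm) / lm ^ ((2 : ℝ) - βm))
    (ξ : ℝ) :
    Filter.Tendsto
      (fun t : ℝ =>
        Complex.exp (-Complex.I * ((t * κ₁ / Real.sqrt (t * κ₂) : ℝ) : ℂ) * (ξ : ℂ)) *
          Complex.exp ((t : ℂ) * gtsPsi μ βp βm αp αm lp lm (ξ / Real.sqrt (t * κ₂))))
      Filter.atTop
      (nhds (Complex.exp (-((ξ : ℂ) ^ 2) / 2))) := by
  have h2p : 0 < Real.Gamma (2 - βp) := Real.Gamma_pos_of_pos (by linarith)
  have h2m : 0 < Real.Gamma (2 - βm) := Real.Gamma_pos_of_pos (by linarith)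
  have hlp2 : 0 < lp ^ ((2:ℝ) - βp) := Real.rpow_pos_of_pos hlp _
  have hlm2 : 0 < lm ^ ((2:ℝ) - βm) := Real.rpow_pos_of_pos hlm _
  have hκ₂pos : 0 < κ₂ := by
    rcases hα with h | h
    · have h1 : 0 < αp * Real.Gamma (2 - βp) / lp ^ ((2:ℝ)-βp) := by positivity
      have h2 : 0 ≤ αm * Real.Gamma (2 - βm) / lm ^ ((2:ℝ)-βm) := by positivity
      rw [hκ₂]; linarith
    · have h1 : 0 ≤ αp * Real.Gamma (2 - βp) / lp ^ ((2:ℝ)-βp) := by positivity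
      have h2 : 0 < αm * Real.Gamma (2 - βm) / lm ^ ((2:ℝ)-βm) := by positivity
      rw [hκ₂]; linarith
  have hΨ0 : gtsPsi μ βp βm αp αm lp lm 0 = 0 := by
    unfold gtsPsi; simp
  rcases eq_or_ne ξ 0 with rfl | hξ
  · refine Tendsto.congr (fun t => ?_) tendsto_const_nhds
    simp [hΨ0]
  -- main case
  set f : ℝ → ℂ := fun u => gtsPsi μ βp βm αp αm lp lm u - Complex.I * κ₁ * u with hfdef
  set f' : ℝ → ℂ := fun u => gtsPsi' μ βp βm αp αm lp lm u - Complex.I * κ₁ with hf'def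
  have hd : ∀ u, HasDerivAt f (f' u) u := by
    intro u
    have h1 : HasDerivAt (fun u : ℝ => Complex.I * (κ₁:ℂ) * (u:ℂ)) (Complex.I * κ₁) u := by
      simpa using (ofReal_hasDerivAt u).const_mul (Complex.I * (κ₁:ℂ))
    exact (gtsPsi_hasDerivAt μ βp βm αp αm lp lm hlp hlm u).sub h1
  have hf0 : f 0 = 0 := by simp [hfdef, hΨ0]
  have hκ₁' : κ₁ = μ - αp * Real.Gamma (-βp) * βp * lp ^ (βp - 1)
      + αm * Real.Gamma (-βm) * βm * lm ^ (βm - 1) := by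
    rw [hκ₁, realA αp βp lp hβp0 hβp1 hlp, realA αm βm lm hβm0 hβm1 hlm]
    ring
  have hκ₂' : κ₂ = αp * Real.Gamma (-βp) * βp * (βp - 1) * lp ^ (βp - 2)
      + αm * Real.Gamma (-βm) * βm * (βm - 1) * lm ^ (βm - 2) := by
    rw [hκ₂, realB αp βp lp hβp0 hβp1 hlp, realB αm βm lm hβm0 hβm1 hlm]
  have hf'0 : f' 0 = 0 := by
    show gtsPsi' μ βp βm αp αm lp lm 0 - Complex.I * κ₁ = 0
    unfold gtsPsi'
    rw [hκ₁']
    simp only [Complex.ofReal_zero, mul_zero, sub_zero, add_zero]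
    rw [cast_cpow_sub_one lp βp hlp, cast_cpow_sub_one lm βm hlm]
    push_cast
    ring
  have h2 : HasDerivAt f' (-(κ₂:ℂ)) 0 := by
    have h := (gtsPsi'_hasDerivAt μ βp βm αp αm lp lm hlp hlm 0).sub_const (Complex.I * (κ₁:ℂ))
    refine HasDerivAt.congr_deriv h (Eq.symm ?_)
    simp only [Complex.ofReal_zero, mul_zero, sub_zero, add_zero]
    rw [cast_cpow_sub_two lp βp hlp, cast_cpow_sub_two lm βm hlm, hκ₂']
    push_cast
    have hI : Complex.I * Complex.I = -1 := Complex.I_mul_I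
    ring_nf
    rw [Complex.I_sq]
    ring
  have hlim := taylor2 hd hf0 hf'0 h2
  have hsqrt : Tendsto Real.sqrt atTop atTop := by
    simp only [funext Real.sqrt_eq_rpow]
    exact tendsto_rpow_atTop (by norm_num)
  have hS : Tendsto (fun t : ℝ => Real.sqrt (t * κ₂)) atTop atTop :=
    hsqrt.comp (Tendsto.atTop_mul_const hκ₂pos tendsto_id)
  have hu0 : Tendsto (fun t : ℝ => ξ / Real.sqrt (t * κ₂)) atTop (nhds 0) :=
    tendsto_const_nhds.div_atTop hS
  have hu : Tendsto (fun t : ℝ => ξ / Real.sqrt (t * κ₂)) atTop (nhdsWithin 0 {(0:ℝ)}ᶜ) := by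
    apply tendsto_nhdsWithin_of_tendsto_nhds_of_eventually_within _ hu0
    filter_upwards [eventually_gt_atTop (0:ℝ)] with t ht
    have hs : 0 < Real.sqrt (t * κ₂) := Real.sqrt_pos.mpr (by positivity)
    exact div_ne_zero hξ hs.ne'
  have hcomp := hlim.comp hu
  have hmul := hcomp.const_mul ((ξ:ℂ)^2 / (κ₂:ℂ))
  have hval : (ξ:ℂ)^2 / (κ₂:ℂ) * (-(κ₂:ℂ)/2) = -((ξ:ℂ)^2)/2 := by
    have : (κ₂:ℂ) ≠ 0 := Complex.ofReal_ne_zero.mpr hκ₂pos.ne'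
    field_simp
  rw [hval] at hmul
  have hEeq : ∀ᶠ t : ℝ in atTop,
      (ξ:ℂ)^2 / (κ₂:ℂ) * (f (ξ / Real.sqrt (t * κ₂)) / ((ξ / Real.sqrt (t * κ₂) : ℝ) : ℂ)^2)
        = -Complex.I * ((t * κ₁ / Real.sqrt (t * κ₂) : ℝ) : ℂ) * (ξ : ℂ) +
          (t : ℂ) * gtsPsi μ βp βm αp αm lp lm (ξ / Real.sqrt (t * κ₂)) := by
    filter_upwards [eventually_gt_atTop (0:ℝ)] with t ht
    have hs : 0 < Real.sqrt (t * κ₂) := Real.sqrt_pos.mpr (by positivity)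
    have hs2 : Real.sqrt (t * κ₂) ^ 2 = t * κ₂ := Real.sq_sqrt (by positivity)
    set s := Real.sqrt (t * κ₂)
    have hs2c : (s:ℂ)^2 = (t:ℂ) * (κ₂:ℂ) := by exact_mod_cast congrArg Complex.ofReal hs2
    have hξc : (ξ:ℂ) ≠ 0 := Complex.ofReal_ne_zero.mpr hξ
    have hsc : (s:ℂ) ≠ 0 := Complex.ofReal_ne_zero.mpr hs.ne'
    have hκc : (κ₂:ℂ) ≠ 0 := Complex.ofReal_ne_zero.mpr hκ₂pos.ne'
    have htc : (t:ℂ) = (s:ℂ)^2 / (κ₂:ℂ) := by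
      rw [eq_div_iff hκc, hs2c]
    simp only [hfdef]
    push_cast
    rw [htc]
    field_simp
    ring
  have hE := hmul.congr' hEeq
  have := (Complex.continuous_exp.tendsto _).comp hE
  refine this.congr ?_
  intro t
  simp only [Function.comp_apply]
  rw [Complex.exp_add]
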